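/- For every nonzero commutative ring k and every k-valued measure μ on the class of permutations, there exists an embedding i of permutations such that μ(i) is not a unit of k; in other words, there are no regular measures on the class of permutations. -/

import Mathlib

/-- A permutation: a finite set equipped with two linear orders. -/
structure Perm2 : Type 1 where
  A : Type
  fin : Fintype A
  ord1 : LinearOrder A
  ord2 : LinearOrder A

attribute [instance] Perm2.fin

/-- The first order. -/
def Perm2.lt1 (X : Perm2) (a b : X.A) : Prop := X.ord1.lt a b
/-- The second order. -/
def Perm2.lt2 (X : Perm2) (a b : X.A) : Prop := X.ord2.lt a b

/-- An embedding of permutations: an injective map preserving both orders. -/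
structure Emb (X Y : Perm2) where
  f : X.A → Y.A
  inj : Function.Injective f
  mono1 : ∀ a b : X.A, X.lt1 a b → Y.lt1 (f a) (f b)
  mono2 : ∀ a b : X.A, X.lt2 a b → Y.lt2 (f a) (f b)

/-- Composition of embeddings. -/
def Emb.comp {X Y Z : Perm2} (j : Emb Y Z) (i : Emb X Y) : Emb X Z where
  f := j.f ∘ i.f
  inj := j.inj.comp i.inj
  mono1 := fun a b h => j.mono1 _ _ (i.mono1 a b h)
  mono2 := fun a b h => j.mono2 _ _ (i.mono2 a b h)

/-- An amalgamation of the embeddings `i : Y → X` and `j : Y → Y'`. -/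
structure Amalg {Y X Y' : Perm2} (i : Emb Y X) (j : Emb Y Y') : Type 1 where
  Z : Perm2
  i' : Emb Y' Z
  j' : Emb X Z
  comm : ∀ a : Y.A, i'.f (j.f a) = j'.f (i.f a)
  cover : ∀ z : Z.A, (∃ a, i'.f a = z) ∨ (∃ b, j'.f b = z)

/-- Isomorphism of amalgamations. -/
def AmalgIso {Y X Y' : Perm2} {i : Emb Y X} {j : Emb Y Y'} (A B : Amalg i j) : Prop :=
  ∃ e : Emb A.Z B.Z, Function.Surjective e.f ∧
    (∀ a, e.f (A.i'.f a) = B.i'.f a) ∧ (∀ b, e.f (A.j'.f b) = B.j'.f b)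

/-- A measure on the class of permutations valued in a commutative ring `k`. -/
structure PMeasure (k : Type) [CommRing k] : Type 1 where
  μ : ∀ {X Y : Perm2}, Emb X Y → k
  iso_invariant : ∀ {X Y X' Y' : Perm2} (i : Emb X Y) (i' : Emb X' Y')
    (u : Emb X X') (v : Emb Y Y'), Function.Surjective u.f → Function.Surjective v.f →
    (∀ a, v.f (i.f a) = i'.f (u.f a)) → μ i = μ i'
  iso_one : ∀ {X Y : Perm2} (i : Emb X Y), Function.Surjective i.f → μ i = 1
  comp_mul : ∀ {X Y Z : Perm2} (i : Emb X Y) (j : Emb Y Z), μ (j.comp i) = μ j * μ i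
  amalg_sum : ∀ {Y X Y' : Perm2} (i : Emb Y X) (j : Emb Y Y') (n : ℕ)
    (r : Fin n → Amalg i j), (∀ A : Amalg i j, ∃! α : Fin n, AmalgIso (r α) A) →
    μ i = ∑ α : Fin n, μ (r α).i'

/-- The permutation denoted by a sequence of distinct natural numbers: the underlying
set consists of the listed numbers, the first order is the numerical one, and the second
order is the order of appearance in the sequence. -/
def listPerm (l : List ℕ) : Perm2 where
  A := {n : ℕ // n ∈ l.toFinset}
  fin := by infer_instance
  ord1 := LinearOrder.lift' (fun x => x.val) Subtype.val_injective
  ord2 := LinearOrder.lift' (fun x => l.idxOf x.val)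
    (fun a b h => Subtype.ext ((List.idxOf_inj (List.mem_toFinset.mp a.2)).mp h))

/-- The subpermutation of `X` on a subset `S`, with the induced orders. -/
noncomputable def subPerm (X : Perm2) (S : Set X.A) : Perm2 where
  A := S
  fin := S.toFinite.fintype
  ord1 := @LinearOrder.lift' _ _ X.ord1 (fun x => x.val) Subtype.val_injective
  ord2 := @LinearOrder.lift' _ _ X.ord2 (fun x => x.val) Subtype.val_injective

/-- The inclusion of a subpermutation. -/
noncomputable def subEmb (X : Perm2) (S : Set X.A) : Emb (subPerm X S) X where
  f := Subtype.val
  inj := Subtype.val_injective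
  mono1 := fun _ _ h => h
  mono2 := fun _ _ h => h


/-! ### Auxiliary machinery -/

instance (X : Perm2) : DecidableEq X.A := X.ord1.toDecidableEq
instance (X : Perm2) (a b : X.A) : Decidable (X.lt1 a b) := X.ord1.toDecidableLT a b
instance (X : Perm2) (a b : X.A) : Decidable (X.lt2 a b) := X.ord2.toDecidableLT a b
instance (l : List ℕ) (a b : {n : ℕ // n ∈ l.toFinset}) : Decidable ((listPerm l).lt2 a b) :=
  (listPerm l).ord2.toDecidableLT a b

lemma Perm2.lt1_trans (X : Perm2) {a b c : X.A} (h : X.lt1 a b) (h' : X.lt1 b c) :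
    X.lt1 a c := @lt_trans X.A X.ord1.toPartialOrder.toPreorder a b c h h'

lemma Perm2.lt2_trans (X : Perm2) {a b c : X.A} (h : X.lt2 a b) (h' : X.lt2 b c) :
    X.lt2 a c := @lt_trans X.A X.ord2.toPartialOrder.toPreorder a b c h h'

lemma Perm2.lt1_ne (X : Perm2) {a b : X.A} (h : X.lt1 a b) : a ≠ b :=
  @ne_of_lt X.A X.ord1.toPartialOrder.toPreorder a b h

lemma Perm2.lt2_asymm (X : Perm2) {a b : X.A} (h : X.lt2 a b) (h' : X.lt2 b a) : False :=
  @lt_asymm X.A X.ord2.toPartialOrder.toPreorder a b h h'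

lemma Perm2.lt2_trichotomy (X : Perm2) (a b : X.A) :
    X.lt2 a b ∨ a = b ∨ X.lt2 b a := @lt_trichotomy X.A X.ord2 a b

/-- Build an embedding out of a `listPerm` from a function on the raw values. -/
def embOfList (l : List ℕ) (Z : Perm2) (g : ℕ → Z.A)
    (h1 : ∀ a ∈ l, ∀ b ∈ l, a < b → Z.lt1 (g a) (g b))
    (h2 : ∀ a ∈ l, ∀ b ∈ l, l.idxOf a < l.idxOf b → Z.lt2 (g a) (g b)) :
    Emb (listPerm l) Z where
  f x := g x.val
  inj a b h := by
    rcases Nat.lt_trichotomy a.val b.val with hl | he | hg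
    · exact absurd h (Perm2.lt1_ne Z
        (h1 _ (List.mem_toFinset.mp a.2) _ (List.mem_toFinset.mp b.2) hl))
    · exact Subtype.ext he
    · exact absurd h.symm (Perm2.lt1_ne Z
        (h1 _ (List.mem_toFinset.mp b.2) _ (List.mem_toFinset.mp a.2) hg))
  mono1 a b h := h1 _ (List.mem_toFinset.mp a.2) _ (List.mem_toFinset.mp b.2) h
  mono2 a b h := h2 _ (List.mem_toFinset.mp a.2) _ (List.mem_toFinset.mp b.2) h

/-- Value-preserving inclusion between `listPerm`s. -/
def linc (l m : List ℕ) (hmem : ∀ x : (listPerm l).A, x.val ∈ m.toFinset)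
    (h2 : ∀ a b : (listPerm l).A,
      (listPerm l).lt2 a b → (listPerm m).lt2 ⟨a.val, hmem a⟩ ⟨b.val, hmem b⟩) :
    Emb (listPerm l) (listPerm m) where
  f x := ⟨x.val, hmem x⟩
  inj a b h := by
    have h' := congrArg Subtype.val h
    exact Subtype.ext h'
  mono1 _ _ h := h
  mono2 := h2

/-! ### The concrete permutations -/

def pY : Perm2 := listPerm [1, 3]
def pX : Perm2 := listPerm [1, 0, 3]
def pY1 : Perm2 := listPerm [1, 2, 3]
def pY2 : Perm2 := listPerm [1, 3, 4]
def pZA : Perm2 := listPerm [1, 0, 2, 3]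
def pZB : Perm2 := listPerm [1, 2, 0, 3]
def pZ2 : Perm2 := listPerm [1, 0, 3, 4]

def y1 : pY.A := ⟨1, by decide⟩
def y3 : pY.A := ⟨3, by decide⟩
def x1 : pX.A := ⟨1, by decide⟩
def x0 : pX.A := ⟨0, by decide⟩
def x3 : pX.A := ⟨3, by decide⟩
def u1 : pY1.A := ⟨1, by decide⟩
def u2 : pY1.A := ⟨2, by decide⟩
def u3 : pY1.A := ⟨3, by decide⟩
def w1 : pY2.A := ⟨1, by decide⟩
def w3 : pY2.A := ⟨3, by decide⟩
def w4 : pY2.A := ⟨4, by decide⟩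

/-! ### The embeddings -/

def iYX : Emb pY pX := linc [1, 3] [1, 0, 3] (by decide) (by decide)
def jY1 : Emb pY pY1 := linc [1, 3] [1, 2, 3] (by decide) (by decide)
def jY2 : Emb pY pY2 := linc [1, 3] [1, 3, 4] (by decide) (by decide)
def iA : Emb pY1 pZA := linc [1, 2, 3] [1, 0, 2, 3] (by decide) (by decide)
def jA : Emb pX pZA := linc [1, 0, 3] [1, 0, 2, 3] (by decide) (by decide)
def iB : Emb pY1 pZB := linc [1, 2, 3] [1, 2, 0, 3] (by decide) (by decide)
def jB : Emb pX pZB := linc [1, 0, 3] [1, 2, 0, 3] (by decide) (by decide)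
def i2 : Emb pY2 pZ2 := linc [1, 3, 4] [1, 0, 3, 4] (by decide) (by decide)
def j2 : Emb pX pZ2 := linc [1, 0, 3] [1, 0, 3, 4] (by decide) (by decide)

/-! ### The canonical amalgamations -/

def AA : Amalg iYX jY1 := ⟨pZA, iA, jA, by decide, by decide⟩
def AB : Amalg iYX jY1 := ⟨pZB, iB, jB, by decide, by decide⟩
def A2 : Amalg iYX jY2 := ⟨pZ2, i2, j2, by decide, by decide⟩

def r1 : Fin 2 → Amalg iYX jY1 := fun α => if α = 0 then AA else AB
def r2 : Fin 1 → Amalg iYX jY2 := fun _ => A2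

/-! ### Classification of the amalgamations -/

lemma class1 (A : Amalg iYX jY1) : ∃! α : Fin 2, AmalgIso (r1 α) A := by
  obtain ⟨Z, I, J, comm, cover⟩ := A
  have hc1 : I.f u1 = J.f x1 := comm y1
  have hc3 : I.f u3 = J.f x3 := comm y3
  -- order-1 facts
  have l01 : Z.lt1 (J.f x0) (I.f u1) := by
    have h := J.mono1 x0 x1 (by decide); rwa [← hc1] at h
  have l12 : Z.lt1 (I.f u1) (I.f u2) := I.mono1 u1 u2 (by decide)
  have l23 : Z.lt1 (I.f u2) (I.f u3) := I.mono1 u2 u3 (by decide)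
  have l13 : Z.lt1 (I.f u1) (I.f u3) := Perm2.lt1_trans Z l12 l23
  have l02 : Z.lt1 (J.f x0) (I.f u2) := Perm2.lt1_trans Z l01 l12
  have l03 : Z.lt1 (J.f x0) (I.f u3) := Perm2.lt1_trans Z l01 l13
  -- order-2 facts
  have k10 : Z.lt2 (I.f u1) (J.f x0) := by
    have h := J.mono2 x1 x0 (by decide); rwa [← hc1] at h
  have k12 : Z.lt2 (I.f u1) (I.f u2) := I.mono2 u1 u2 (by decide)
  have k23 : Z.lt2 (I.f u2) (I.f u3) := I.mono2 u2 u3 (by decide)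
  have k13 : Z.lt2 (I.f u1) (I.f u3) := Perm2.lt2_trans Z k12 k23
  have k03 : Z.lt2 (J.f x0) (I.f u3) := by
    have h := J.mono2 x0 x3 (by decide); rwa [← hc3] at h
  have hne : J.f x0 ≠ I.f u2 := Perm2.lt1_ne Z l02
  -- the common surjectivity argument
  have hsurj : ∀ g : ℕ → Z.A, g 0 = J.f x0 → g 1 = I.f u1 → g 2 = I.f u2 → g 3 = I.f u3 →
      ∀ z : Z.A, ∃ x : ℕ, (x = 0 ∨ x = 1 ∨ x = 2 ∨ x = 3) ∧ g x = z := by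
    intro g g0 g1 g2 g3 z
    rcases cover z with ⟨⟨n, hn⟩, ha⟩ | ⟨⟨n, hn⟩, hb⟩
    · have hn' : n = 1 ∨ n = 2 ∨ n = 3 := by simpa using hn
      rcases hn' with rfl | rfl | rfl
      · exact ⟨1, by tauto, g1.trans ha⟩
      · exact ⟨2, by tauto, g2.trans ha⟩
      · exact ⟨3, by tauto, g3.trans ha⟩
    · have hn' : n = 1 ∨ n = 0 ∨ n = 3 := by simpa using hn
      rcases hn' with rfl | rfl | rfl
      · exact ⟨1, by tauto, g1.trans (hc1.trans hb)⟩
      · exact ⟨0, by tauto, g0.trans hb⟩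
      · exact ⟨3, by tauto, g3.trans (hc3.trans hb)⟩
  rcases Perm2.lt2_trichotomy Z (J.f x0) (I.f u2) with hlt | heq | hgt
  · -- `J.f x0 ≺ I.f u2` : the amalgam is `AA`
    refine ⟨0, ?_, ?_⟩
    · refine ⟨embOfList [1, 0, 2, 3] Z
        (fun n => if n = 0 then J.f x0 else if n = 1 then I.f u1
          else if n = 2 then I.f u2 else I.f u3) ?_ ?_, ?_, ?_, ?_⟩
      · intro a ha b hb hab
        fin_cases ha <;> fin_cases hb <;>
          first
            | exact absurd hab (by decide)
            | exact l01 | exact l12 | exact l23 | exact l13 | exact l02 | exact l03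
      · intro a ha b hb hab
        fin_cases ha <;> fin_cases hb <;>
          first
            | exact absurd hab (by decide)
            | exact k10 | exact k12 | exact k23 | exact k13 | exact k03 | exact hlt
      · intro z
        obtain ⟨x, hx, hgx⟩ := hsurj (fun n => if n = 0 then J.f x0 else if n = 1 then I.f u1
          else if n = 2 then I.f u2 else I.f u3) rfl rfl rfl rfl z
        rcases hx with rfl | rfl | rfl | rfl
        · exact ⟨⟨0, by decide⟩, hgx⟩
        · exact ⟨⟨1, by decide⟩, hgx⟩
        · exact ⟨⟨2, by decide⟩, hgx⟩
        · exact ⟨⟨3, by decide⟩, hgx⟩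
      · intro a
        obtain ⟨n, hn⟩ := a
        have hn' : n = 1 ∨ n = 2 ∨ n = 3 := by simpa using hn
        rcases hn' with rfl | rfl | rfl <;> rfl
      · intro b
        obtain ⟨n, hn⟩ := b
        have hn' : n = 1 ∨ n = 0 ∨ n = 3 := by simpa using hn
        rcases hn' with rfl | rfl | rfl
        · exact hc1
        · rfl
        · exact hc3
    · refine Fin.forall_fin_two.mpr ⟨fun _ => rfl, fun hβ => False.elim ?_⟩
      obtain ⟨e, -, hi, hj⟩ := hβ
      have h := e.mono2 ((r1 1).i'.f u2) ((r1 1).j'.f x0) (by decide)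
      rw [hi u2, hj x0] at h
      exact Perm2.lt2_asymm Z hlt h
  · exact absurd heq hne
  · -- `I.f u2 ≺ J.f x0` : the amalgam is `AB`
    refine ⟨1, ?_, ?_⟩
    · refine ⟨embOfList [1, 2, 0, 3] Z
        (fun n => if n = 0 then J.f x0 else if n = 1 then I.f u1
          else if n = 2 then I.f u2 else I.f u3) ?_ ?_, ?_, ?_, ?_⟩
      · intro a ha b hb hab
        fin_cases ha <;> fin_cases hb <;>
          first
            | exact absurd hab (by decide)
            | exact l01 | exact l12 | exact l23 | exact l13 | exact l02 | exact l03
      · intro a ha b hb hab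
        fin_cases ha <;> fin_cases hb <;>
          first
            | exact absurd hab (by decide)
            | exact k10 | exact k12 | exact k23 | exact k13 | exact k03 | exact hgt
      · intro z
        obtain ⟨x, hx, hgx⟩ := hsurj (fun n => if n = 0 then J.f x0 else if n = 1 then I.f u1
          else if n = 2 then I.f u2 else I.f u3) rfl rfl rfl rfl z
        rcases hx with rfl | rfl | rfl | rfl
        · exact ⟨⟨0, by decide⟩, hgx⟩
        · exact ⟨⟨1, by decide⟩, hgx⟩
        · exact ⟨⟨2, by decide⟩, hgx⟩
        · exact ⟨⟨3, by decide⟩, hgx⟩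
      · intro a
        obtain ⟨n, hn⟩ := a
        have hn' : n = 1 ∨ n = 2 ∨ n = 3 := by simpa using hn
        rcases hn' with rfl | rfl | rfl <;> rfl
      · intro b
        obtain ⟨n, hn⟩ := b
        have hn' : n = 1 ∨ n = 0 ∨ n = 3 := by simpa using hn
        rcases hn' with rfl | rfl | rfl
        · exact hc1
        · rfl
        · exact hc3
    · refine Fin.forall_fin_two.mpr ⟨fun hβ => False.elim ?_, fun _ => rfl⟩
      obtain ⟨e, -, hi, hj⟩ := hβ
      have h := e.mono2 ((r1 0).j'.f x0) ((r1 0).i'.f u2) (by decide)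
      rw [hj x0, hi u2] at h
      exact Perm2.lt2_asymm Z hgt h

lemma class2 (A : Amalg iYX jY2) : ∃! α : Fin 1, AmalgIso (r2 α) A := by
  obtain ⟨Z, I, J, comm, cover⟩ := A
  have hc1 : I.f w1 = J.f x1 := comm y1
  have hc3 : I.f w3 = J.f x3 := comm y3
  have l01 : Z.lt1 (J.f x0) (I.f w1) := by
    have h := J.mono1 x0 x1 (by decide); rwa [← hc1] at h
  have l13 : Z.lt1 (I.f w1) (I.f w3) := I.mono1 w1 w3 (by decide)
  have l34 : Z.lt1 (I.f w3) (I.f w4) := I.mono1 w3 w4 (by decide)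
  have l14 : Z.lt1 (I.f w1) (I.f w4) := Perm2.lt1_trans Z l13 l34
  have l03 : Z.lt1 (J.f x0) (I.f w3) := Perm2.lt1_trans Z l01 l13
  have l04 : Z.lt1 (J.f x0) (I.f w4) := Perm2.lt1_trans Z l01 l14
  have k10 : Z.lt2 (I.f w1) (J.f x0) := by
    have h := J.mono2 x1 x0 (by decide); rwa [← hc1] at h
  have k03 : Z.lt2 (J.f x0) (I.f w3) := by
    have h := J.mono2 x0 x3 (by decide); rwa [← hc3] at h
  have k34 : Z.lt2 (I.f w3) (I.f w4) := I.mono2 w3 w4 (by decide)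
  have k13 : Z.lt2 (I.f w1) (I.f w3) := Perm2.lt2_trans Z k10 k03
  have k14 : Z.lt2 (I.f w1) (I.f w4) := Perm2.lt2_trans Z k13 k34
  have k04 : Z.lt2 (J.f x0) (I.f w4) := Perm2.lt2_trans Z k03 k34
  refine ⟨0, ?_, fun β _ => Subsingleton.elim β 0⟩
  refine ⟨embOfList [1, 0, 3, 4] Z
      (fun n => if n = 0 then J.f x0 else if n = 1 then I.f w1
        else if n = 3 then I.f w3 else I.f w4) ?_ ?_, ?_, ?_, ?_⟩
  · intro a ha b hb hab
    fin_cases ha <;> fin_cases hb <;>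
      first
        | exact absurd hab (by decide)
        | exact l01 | exact l13 | exact l34 | exact l14 | exact l03 | exact l04
  · intro a ha b hb hab
    fin_cases ha <;> fin_cases hb <;>
      first
        | exact absurd hab (by decide)
        | exact k10 | exact k03 | exact k34 | exact k13 | exact k14 | exact k04
  · intro z
    rcases cover z with ⟨⟨n, hn⟩, ha⟩ | ⟨⟨n, hn⟩, hb⟩
    · have hn' : n = 1 ∨ n = 3 ∨ n = 4 := by simpa using hn
      rcases hn' with rfl | rfl | rfl
      · exact ⟨⟨1, by decide⟩, ha⟩
      · exact ⟨⟨3, by decide⟩, ha⟩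
      · exact ⟨⟨4, by decide⟩, ha⟩
    · have hn' : n = 1 ∨ n = 0 ∨ n = 3 := by simpa using hn
      rcases hn' with rfl | rfl | rfl
      · exact ⟨⟨1, by decide⟩, hc1.trans hb⟩
      · exact ⟨⟨0, by decide⟩, hb⟩
      · exact ⟨⟨3, by decide⟩, hc3.trans hb⟩
  · intro a
    obtain ⟨n, hn⟩ := a
    have hn' : n = 1 ∨ n = 3 ∨ n = 4 := by simpa using hn
    rcases hn' with rfl | rfl | rfl <;> rfl
  · intro b
    obtain ⟨n, hn⟩ := b
    have hn' : n = 1 ∨ n = 0 ∨ n = 3 := by simpa using hn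
    rcases hn' with rfl | rfl | rfl
    · exact hc1
    · rfl
    · exact hc3

/-! ### The isomorphism between the two shared amalgam classes -/

def uIso : Emb pY1 pY2 :=
  embOfList [1, 2, 3] pY2
    (fun n => if n = 1 then w1 else if n = 2 then w3 else w4) (by decide) (by decide)

def vIso : Emb pZA pZ2 :=
  embOfList [1, 0, 2, 3] pZ2
    (fun n => if n = 0 then ⟨0, by decide⟩ else if n = 1 then ⟨1, by decide⟩
      else if n = 2 then ⟨3, by decide⟩ else ⟨4, by decide⟩) (by decide) (by decide)


/-- There are no regular measures on the class of permutations: for every nonzero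
commutative ring k and every k-valued measure, some embedding has non-unit measure. -/
theorem no_regular_measure (k : Type) [CommRing k] [Nontrivial k] (m : PMeasure k) :
    ∃ (X Y : Perm2) (i : Emb X Y), ¬IsUnit (m.μ i) := by
  have h1 : m.μ iYX = m.μ AA.i' + m.μ AB.i' := by
    have h := m.amalg_sum iYX jY1 2 r1 class1
    rw [Fin.sum_univ_two] at h
    exact h
  have h2 : m.μ iYX = m.μ A2.i' := by
    have h := m.amalg_sum iYX jY2 1 r2 class2
    rw [Fin.sum_univ_one] at h
    exact h
  have h3 : m.μ AA.i' = m.μ A2.i' :=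
    m.iso_invariant AA.i' A2.i' uIso vIso (by decide) (by decide) (by decide)
  have hz : m.μ AB.i' = 0 := by
    rw [h3, ← h2] at h1
    exact left_eq_add.mp h1
  refine ⟨pY1, pZB, AB.i', ?_⟩
  erw [hz]
  exact not_isUnit_zero
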